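/- Let (λ_i)_{i≥0} be a nondecreasing sequence of nonnegative reals tending to infinity, and d > 0, V > 0. If ∑_i e^{-tλ_i} ~ V·(4π t)^{-d/2} as t → 0⁺, then the counting function N(λ) = #{i : λ_i ≤ λ} satisfies N(λ) ~ V λ^{d/2} / ((4π)^{d/2} Γ(d/2+1)) as λ → ∞. -/

import Mathlib

open MeasureTheory Real Filter Topology Set Polynomial

namespace Karamata13

noncomputable def F (lam : ℕ → ℝ) (t : ℝ) : ℝ := ∑' i, Real.exp (-t * lam i)

lemma exp_pow (k : ℕ) (t x : ℝ) :
    Real.exp (-t * x) ^ (k + 1) = Real.exp (-(((k : ℝ) + 1) * t) * x) := by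
  rw [← Real.exp_nat_mul]; push_cast; ring_nf

lemma exp1 (k : ℕ) (x : ℝ) :
    Real.exp (-x) * Real.exp (-x) ^ k = Real.exp (-(((k : ℝ) + 1) * x)) := by
  rw [← Real.exp_nat_mul, ← Real.exp_add]; push_cast; ring_nf

variable {lam : ℕ → ℝ} {r A : ℝ}

lemma summable_pow (hsumm : ∀ t : ℝ, 0 < t → Summable fun i => Real.exp (-t * lam i))
    (k : ℕ) {t : ℝ} (ht : 0 < t) :
    Summable fun i => Real.exp (-t * lam i) ^ (k + 1) := by
  refine (hsumm (((k : ℝ) + 1) * t) (by positivity)).congr fun i => ?_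
  rw [exp_pow]

lemma tsum_pow (k : ℕ) (t : ℝ) :
    ∑' i, Real.exp (-t * lam i) ^ (k + 1) = F lam (((k : ℝ) + 1) * t) :=
  tsum_congr fun i => exp_pow k t (lam i)

lemma mul_eval (p : ℝ[X]) (x : ℝ) :
    x * p.eval x = ∑ k ∈ Finset.range (p.natDegree + 1), p.coeff k * x ^ (k + 1) := by
  rw [Polynomial.eval_eq_sum_range, Finset.mul_sum]
  exact Finset.sum_congr rfl fun k _ => by ring

lemma summable_poly (hsumm : ∀ t : ℝ, 0 < t → Summable fun i => Real.exp (-t * lam i))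
    (p : ℝ[X]) {t : ℝ} (ht : 0 < t) :
    Summable fun i => Real.exp (-t * lam i) * p.eval (Real.exp (-t * lam i)) := by
  refine Summable.congr (f := fun i => ∑ k ∈ Finset.range (p.natDegree + 1),
      p.coeff k * Real.exp (-t * lam i) ^ (k + 1)) ?_ fun i => (mul_eval p _).symm
  exact summable_sum fun k _ => (summable_pow hsumm k ht).mul_left _

lemma Ib (hr : 0 < r) {b : ℝ} (hb : 0 < b) :
    IntegrableOn (fun x => x ^ (r - 1) * Real.exp (-(b * x))) (Ioi 0) := by
  have := integrableOn_rpow_mul_exp_neg_mul_rpow (p := 1) (s := r - 1) (b := b)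
    (by linarith) zero_lt_one hb
  refine this.congr_fun (fun x hx => ?_) measurableSet_Ioi
  simp only [Real.rpow_one, neg_mul]

lemma integrable_polyJ (hr : 0 < r) (p : ℝ[X]) :
    IntegrableOn (fun x => Real.exp (-x) * p.eval (Real.exp (-x)) * x ^ (r - 1)) (Ioi 0) := by
  have key : ∀ x : ℝ, Real.exp (-x) * p.eval (Real.exp (-x)) * x ^ (r - 1)
      = ∑ k ∈ Finset.range (p.natDegree + 1),
        p.coeff k * (x ^ (r - 1) * Real.exp (-(((k : ℝ) + 1) * x))) := by
    intro x
    rw [mul_eval, Finset.sum_mul]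
    refine Finset.sum_congr rfl fun k _ => ?_
    rw [pow_succ, ← exp1 k x]
    ring
  refine IntegrableOn.congr_fun (integrable_finset_sum _ fun k _ =>
    ((Ib hr (by positivity)).const_mul (p.coeff k))) (fun x _ => (key x).symm) measurableSet_Ioi

lemma J_eq (hr : 0 < r) (p : ℝ[X]) :
    ∫ x in Ioi (0:ℝ), Real.exp (-x) * p.eval (Real.exp (-x)) * x ^ (r - 1)
      = Real.Gamma r * ∑ k ∈ Finset.range (p.natDegree + 1),
          p.coeff k * ((k : ℝ) + 1) ^ (-r) := by
  have key : ∀ x : ℝ, Real.exp (-x) * p.eval (Real.exp (-x)) * x ^ (r - 1)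
      = ∑ k ∈ Finset.range (p.natDegree + 1),
        p.coeff k * (x ^ (r - 1) * Real.exp (-(((k : ℝ) + 1) * x))) := by
    intro x
    rw [mul_eval, Finset.sum_mul]
    refine Finset.sum_congr rfl fun k _ => ?_
    rw [pow_succ, ← exp1 k x]
    ring
  rw [setIntegral_congr_fun measurableSet_Ioi (fun x _ => key x),
    integral_finset_sum _ fun k _ => ((Ib hr (by positivity)).const_mul (p.coeff k)),
    Finset.mul_sum]
  refine Finset.sum_congr rfl fun k _ => ?_
  rw [integral_const_mul, integral_rpow_mul_exp_neg_mul_Ioi hr (by positivity)]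
  have hk : (0:ℝ) < (k : ℝ) + 1 := by positivity
  rw [one_div, Real.inv_rpow hk.le, ← Real.rpow_neg hk.le]
  ring

lemma mono_limit (hF : Tendsto (fun t => t ^ r * F lam t) (𝓝[>] 0) (𝓝 A)) (k : ℕ) :
    Tendsto (fun t => t ^ r * F lam (((k : ℝ) + 1) * t)) (𝓝[>] 0)
      (𝓝 (((k : ℝ) + 1) ^ (-r) * A)) := by
  set m : ℝ := (k : ℝ) + 1 with hm
  have hm0 : 0 < m := by positivity
  have h1 : Tendsto (fun t : ℝ => m * t) (𝓝[>] 0) (𝓝[>] 0) := by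
    rw [tendsto_nhdsWithin_iff]
    constructor
    · simpa using ((continuous_mul_left m).tendsto 0).mono_left nhdsWithin_le_nhds
    · filter_upwards [self_mem_nhdsWithin] with t (ht : (0:ℝ) < t)
      exact mul_pos hm0 ht
  have h2 := (hF.comp h1).const_mul (m ^ (-r))
  refine Tendsto.congr' ?_ h2
  filter_upwards [self_mem_nhdsWithin] with t (ht : (0:ℝ) < t)
  simp only [Function.comp]
  rw [Real.mul_rpow hm0.le ht.le, ← mul_assoc, ← mul_assoc,
    ← Real.rpow_add hm0, neg_add_cancel, Real.rpow_zero, one_mul]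

lemma poly_limit (hsumm : ∀ t : ℝ, 0 < t → Summable fun i => Real.exp (-t * lam i))
    (hF : Tendsto (fun t => t ^ r * F lam t) (𝓝[>] 0) (𝓝 A)) (p : ℝ[X]) :
    Tendsto (fun t => t ^ r * ∑' i, Real.exp (-t * lam i) * p.eval (Real.exp (-t * lam i)))
      (𝓝[>] 0)
      (𝓝 (A * ∑ k ∈ Finset.range (p.natDegree + 1), p.coeff k * ((k : ℝ) + 1) ^ (-r))) := by
  have hval : A * ∑ k ∈ Finset.range (p.natDegree + 1), p.coeff k * ((k : ℝ) + 1) ^ (-r)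
      = ∑ k ∈ Finset.range (p.natDegree + 1), p.coeff k * (((k : ℝ) + 1) ^ (-r) * A) := by
    rw [Finset.mul_sum]; exact Finset.sum_congr rfl fun k _ => by ring
  rw [hval]
  refine Tendsto.congr' ?_
    (tendsto_finset_sum _ fun k _ => (mono_limit hF k).const_mul (p.coeff k))
  filter_upwards [self_mem_nhdsWithin] with t (ht : (0:ℝ) < t)
  have h1 : (fun i => Real.exp (-t * lam i) * p.eval (Real.exp (-t * lam i)))
      = fun i => ∑ k ∈ Finset.range (p.natDegree + 1),
          p.coeff k * Real.exp (-t * lam i) ^ (k + 1) := funext fun i => mul_eval p _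
  rw [h1, Summable.tsum_finsetSum fun k _ => (summable_pow hsumm k ht).mul_left _, Finset.mul_sum]
  exact Finset.sum_congr rfl fun k _ => by rw [tsum_mul_left, tsum_pow]; ring

lemma tendsto_of_approx {α : Type*} {l : Filter α} {f : α → ℝ} {c : ℝ}
    (h : ∀ ε > (0:ℝ), ∃ (u v : α → ℝ) (Lu Lv : ℝ),
      (∀ᶠ t in l, v t ≤ f t ∧ f t ≤ u t) ∧ Tendsto u l (𝓝 Lu) ∧ Tendsto v l (𝓝 Lv)
      ∧ Lu ≤ c + ε ∧ c - ε ≤ Lv) : Tendsto f l (𝓝 c) := by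
  rw [Metric.tendsto_nhds]
  intro ε hε
  obtain ⟨u, v, Lu, Lv, hev, hu, hv, hLu, hLv⟩ := h (ε/3) (by positivity)
  have h1 : ∀ᶠ t in l, u t < Lu + ε/3 := hu.eventually_lt_const (by linarith)
  have h2 : ∀ᶠ t in l, Lv - ε/3 < v t := hv.eventually_const_lt (by linarith)
  filter_upwards [hev, h1, h2] with t ht h1t h2t
  rw [Real.dist_eq, abs_sub_lt_iff]
  constructor <;> nlinarith [ht.1, ht.2]

lemma finite_le (htop : Tendsto lam atTop atTop) (L : ℝ) :
    {i : ℕ | lam i ≤ L}.Finite := by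
  obtain ⟨n, hn⟩ := eventually_atTop.mp (htop.eventually (eventually_gt_atTop L))
  refine (Set.finite_Iio n).subset fun i hi => ?_
  by_contra h
  exact absurd (hn i (le_of_not_gt h)) (not_lt.mpr hi)

noncomputable def uu (x : ℝ) : ℝ := (max x (Real.exp (-1)))⁻¹
noncomputable def ramp (s δ x : ℝ) : ℝ := max 0 (min 1 ((x - s) / δ))
noncomputable def gup (δ x : ℝ) : ℝ := uu x * ramp (Real.exp (-1) - δ) δ x
noncomputable def glo (δ x : ℝ) : ℝ := uu x * ramp (Real.exp (-1)) δ x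

lemma max_pos (x : ℝ) : 0 < max x (Real.exp (-1)) := lt_max_of_lt_right (Real.exp_pos _)

lemma uu_nonneg (x : ℝ) : 0 ≤ uu x := inv_nonneg.mpr (max_pos x).le

lemma ramp_nonneg (s δ x : ℝ) : 0 ≤ ramp s δ x := le_max_left _ _

lemma ramp_le_one (s δ x : ℝ) : ramp s δ x ≤ 1 := max_le zero_le_one (min_le_left _ _)

lemma ramp_eq_one {s δ x : ℝ} (hδ : 0 < δ) (h : s + δ ≤ x) : ramp s δ x = 1 := by
  have h1 : (1:ℝ) ≤ (x - s) / δ := by rw [le_div_iff₀ hδ]; linarith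
  rw [ramp, min_eq_left h1, max_eq_right zero_le_one]

lemma ramp_eq_zero {s δ x : ℝ} (hδ : 0 < δ) (h : x < s) : ramp s δ x = 0 := by
  have h1 : (x - s) / δ ≤ 0 := le_of_lt (div_neg_of_neg_of_pos (by linarith) hδ)
  rw [ramp, min_eq_right (h1.trans zero_le_one), max_eq_left h1]

lemma uu_eq {x : ℝ} (h : Real.exp (-1) ≤ x) : uu x = x⁻¹ := by rw [uu, max_eq_left h]

lemma mul_uu_le_one {x : ℝ} (hx : 0 ≤ x) : x * uu x ≤ 1 := by
  rw [uu, mul_inv_le_iff₀ (max_pos x), one_mul]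
  exact le_max_left _ _

lemma gup_nonneg (δ x : ℝ) : 0 ≤ gup δ x := mul_nonneg (uu_nonneg x) (ramp_nonneg _ _ _)

lemma glo_nonneg (δ x : ℝ) : 0 ≤ glo δ x := mul_nonneg (uu_nonneg x) (ramp_nonneg _ _ _)

lemma hG1 {δ x : ℝ} (hδ : 0 < δ) (hex : Real.exp (-1) ≤ x) : x * gup δ x = 1 := by
  have hx0 : 0 < x := lt_of_lt_of_le (Real.exp_pos _) hex
  rw [gup, uu_eq hex, ramp_eq_one hδ (by linarith), mul_one, mul_inv_cancel₀ (ne_of_gt hx0)]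

lemma hG3 {δ x : ℝ} (hδ : 0 < δ) (hx : 0 ≤ x) :
    x * gup δ x ≤ if Real.exp (-1) - δ ≤ x then 1 else 0 := by
  rcases le_or_gt (Real.exp (-1) - δ) x with h | h
  · rw [if_pos h, gup, ← mul_assoc]
    have h1 := mul_uu_le_one hx
    have h2 := ramp_le_one (Real.exp (-1) - δ) δ x
    have h3 := ramp_nonneg (Real.exp (-1) - δ) δ x
    have h4 : 0 ≤ x * uu x := mul_nonneg hx (uu_nonneg x)
    nlinarith
  · rw [if_neg (not_le.mpr h), gup, ramp_eq_zero hδ h, mul_zero, mul_zero]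

lemma hH1 {δ x : ℝ} (hδ : 0 < δ) (hx : 0 ≤ x) :
    x * glo δ x ≤ if Real.exp (-1) ≤ x then 1 else 0 := by
  rcases le_or_gt (Real.exp (-1)) x with h | h
  · rw [if_pos h, glo, ← mul_assoc]
    have h1 := mul_uu_le_one hx
    have h2 := ramp_le_one (Real.exp (-1)) δ x
    have h3 := ramp_nonneg (Real.exp (-1)) δ x
    have h4 : 0 ≤ x * uu x := mul_nonneg hx (uu_nonneg x)
    nlinarith
  · rw [if_neg (not_le.mpr h), glo, ramp_eq_zero hδ h, mul_zero, mul_zero]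

lemma hH2 {δ x : ℝ} (hδ : 0 < δ) (hbx : Real.exp (-1) + δ ≤ x) : x * glo δ x = 1 := by
  have hex : Real.exp (-1) ≤ x := by linarith
  have hx0 : 0 < x := lt_of_lt_of_le (Real.exp_pos _) hex
  rw [glo, uu_eq hex, ramp_eq_one hδ hbx, mul_one, mul_inv_cancel₀ (ne_of_gt hx0)]

lemma gup_cont (δ : ℝ) : Continuous (gup δ) := by
  refine Continuous.mul ?_ ?_
  · exact (continuous_id.max continuous_const).inv₀ fun x => ne_of_gt (max_pos x)
  · exact continuous_const.max
      (continuous_const.min ((continuous_id.sub continuous_const).div_const δ))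

lemma glo_cont (δ : ℝ) : Continuous (glo δ) := by
  refine Continuous.mul ?_ ?_
  · exact (continuous_id.max continuous_const).inv₀ fun x => ne_of_gt (max_pos x)
  · exact continuous_const.max
      (continuous_const.min ((continuous_id.sub continuous_const).div_const δ))

lemma exp_mem_Icc {t y : ℝ} (ht : 0 < t) (hy : 0 ≤ y) :
    Real.exp (-t * y) ∈ Icc (0:ℝ) 1 := by
  constructor
  · exact (Real.exp_pos _).le
  · rw [Real.exp_le_one_iff]
    have := mul_nonneg ht.le hy
    linarith

lemma le_iff_exp_le {t y : ℝ} (ht : 0 < t) :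
    (y ≤ 1 / t ↔ Real.exp (-1) ≤ Real.exp (-t * y)) := by
  rw [Real.exp_le_exp, le_div_iff₀ ht]
  constructor <;> intro h <;> nlinarith

theorem karamata_main (hnonneg : ∀ i, 0 ≤ lam i) (htop : Tendsto lam atTop atTop)
    (hsumm : ∀ t : ℝ, 0 < t → Summable fun i => Real.exp (-t * lam i))
    (hr : 0 < r) (hA : 0 < A)
    (hF : Tendsto (fun t => t ^ r * F lam t) (𝓝[>] 0) (𝓝 A)) :
    Tendsto (fun t : ℝ => t ^ r * (Nat.card {i : ℕ | lam i ≤ 1 / t} : ℝ)) (𝓝[>] 0)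
      (𝓝 (A / Real.Gamma (r + 1))) := by
  have hΓr : 0 < Real.Gamma r := Real.Gamma_pos_of_pos hr
  have hΓr1 : Real.Gamma (r + 1) = r * Real.Gamma r := Real.Gamma_add_one (ne_of_gt hr)
  set c : ℝ := A / Real.Gamma (r + 1) with hc
  have hcpos : 0 < c := by rw [hc, hΓr1]; positivity
  refine tendsto_of_approx fun ε hε => ?_
  set ε' : ℝ := ε / (8 * A) with hε'def
  have hε'pos : 0 < ε' := by rw [hε'def]; positivity
  have hcont1 : Tendsto (fun δ : ℝ => (-Real.log (Real.exp (-1) - δ)) ^ r) (𝓝 0) (𝓝 1) := by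
    have h0 : Tendsto (fun δ : ℝ => Real.exp (-1) - δ) (𝓝 0) (𝓝 (Real.exp (-1))) := by
      simpa using Continuous.tendsto (by fun_prop : Continuous fun δ : ℝ => Real.exp (-1) - δ) (0:ℝ)
    have hlog : Tendsto (fun δ : ℝ => -Real.log (Real.exp (-1) - δ)) (𝓝 0) (𝓝 1) := by
      have h := ((Real.continuousAt_log (ne_of_gt (Real.exp_pos _))).tendsto.comp h0).neg
      rw [Real.log_exp] at h
      simpa using h
    have hrpow : ContinuousAt (fun x : ℝ => x ^ r) 1 :=
      Real.continuousAt_rpow_const 1 r (Or.inl one_ne_zero)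
    have h2 := hrpow.tendsto.comp hlog
    rwa [Real.one_rpow] at h2
  have hcont2 : Tendsto (fun δ : ℝ => (-Real.log (Real.exp (-1) + δ)) ^ r) (𝓝 0) (𝓝 1) := by
    have h0 : Tendsto (fun δ : ℝ => Real.exp (-1) + δ) (𝓝 0) (𝓝 (Real.exp (-1))) := by
      simpa using Continuous.tendsto (by fun_prop : Continuous fun δ : ℝ => Real.exp (-1) + δ) (0:ℝ)
    have hlog : Tendsto (fun δ : ℝ => -Real.log (Real.exp (-1) + δ)) (𝓝 0) (𝓝 1) := by
      have h := ((Real.continuousAt_log (ne_of_gt (Real.exp_pos _))).tendsto.comp h0).neg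
      rw [Real.log_exp] at h
      simpa using h
    have hrpow : ContinuousAt (fun x : ℝ => x ^ r) 1 :=
      Real.continuousAt_rpow_const 1 r (Or.inl one_ne_zero)
    have h2 := hrpow.tendsto.comp hlog
    rwa [Real.one_rpow] at h2
  have hεc : 0 < ε / (4 * c) := by positivity
  have hexp1 : Real.exp (-1) < 1 := by
    rw [← Real.exp_zero]; exact Real.exp_lt_exp.mpr (by norm_num)
  have hev : ∀ᶠ δ in 𝓝[>] (0:ℝ),
      (((-Real.log (Real.exp (-1) - δ)) ^ r < 1 + ε / (4 * c) ∧
        1 - ε / (4 * c) < (-Real.log (Real.exp (-1) + δ)) ^ r) ∧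
        δ < Real.exp (-1) ∧ Real.exp (-1) + δ < 1) ∧ 0 < δ := by
    have e1 := hcont1.eventually_lt_const (by linarith : (1:ℝ) < 1 + ε / (4 * c))
    have e2 := hcont2.eventually_const_lt (by linarith : 1 - ε / (4 * c) < (1:ℝ))
    have e3 : ∀ᶠ δ in 𝓝 (0:ℝ), δ < Real.exp (-1) := eventually_lt_nhds (Real.exp_pos _)
    have e4 : ∀ᶠ δ in 𝓝 (0:ℝ), Real.exp (-1) + δ < 1 := by
      have h0 : Tendsto (fun δ : ℝ => Real.exp (-1) + δ) (𝓝 0) (𝓝 (Real.exp (-1))) := by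
        simpa using Continuous.tendsto (by fun_prop : Continuous fun δ : ℝ => Real.exp (-1) + δ) (0:ℝ)
      exact h0.eventually_lt_const hexp1
    exact Eventually.and
      (((e1.and e2).and (e3.and e4)).filter_mono nhdsWithin_le_nhds) self_mem_nhdsWithin
  obtain ⟨δ, ⟨⟨hφ, hψ⟩, hδe, hδ1⟩, hδ0⟩ := hev.exists
  set aa : ℝ := Real.exp (-1) - δ with haa
  set bb : ℝ := Real.exp (-1) + δ with hbb
  have ha0 : 0 < aa := by rw [haa]; linarith
  have ha1 : aa < 1 := by rw [haa]; linarith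
  have hb0 : 0 < bb := by rw [hbb]; linarith [Real.exp_pos (-1 : ℝ)]
  have hb1 : bb < 1 := hδ1
  set cp : ℝ := -Real.log aa with hcp
  set cm : ℝ := -Real.log bb with hcm
  have hcp0 : 0 < cp := by rw [hcp]; linarith [Real.log_neg ha0 ha1]
  have hcm0 : 0 < cm := by rw [hcm]; linarith [Real.log_neg hb0 hb1]
  obtain ⟨P, hP⟩ := exists_polynomial_near_of_continuousOn 0 1 (gup δ)
    (gup_cont δ).continuousOn ε' hε'pos
  obtain ⟨Q, hQ⟩ := exists_polynomial_near_of_continuousOn 0 1 (glo δ)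
    (glo_cont δ).continuousOn ε' hε'pos
  set pp : ℝ[X] := P + C ε' with hppdef
  set pm : ℝ[X] := Q - C ε' with hpmdef
  have hppev : ∀ x : ℝ, pp.eval x = P.eval x + ε' := fun x => by rw [hppdef]; simp
  have hpmev : ∀ x : ℝ, pm.eval x = Q.eval x - ε' := fun x => by rw [hpmdef]; simp
  have hP1 : ∀ x ∈ Icc (0:ℝ) 1, (if Real.exp (-1) ≤ x then (1:ℝ) else 0) ≤ x * pp.eval x := by
    intro x hx
    have hgp := abs_lt.mp (hP x hx)
    have h1 : gup δ x ≤ P.eval x + ε' := by linarith [hgp.1]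
    have h2 : (0:ℝ) ≤ x := hx.1
    rw [hppev]
    split_ifs with h
    · rw [← hG1 hδ0 h]
      exact mul_le_mul_of_nonneg_left h1 h2
    · exact mul_nonneg h2 (le_trans (gup_nonneg δ x) h1)
  have hP2 : ∀ x ∈ Icc (0:ℝ) 1, x * pp.eval x ≤ (if aa ≤ x then (1:ℝ) else 0) + 2 * ε' * x := by
    intro x hx
    have hgp := abs_lt.mp (hP x hx)
    have h1 : P.eval x + ε' ≤ gup δ x + 2 * ε' := by linarith [hgp.2]
    have h2 : (0:ℝ) ≤ x := hx.1
    rw [hppev]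
    calc x * (P.eval x + ε') ≤ x * (gup δ x + 2 * ε') := mul_le_mul_of_nonneg_left h1 h2
    _ = x * gup δ x + 2 * ε' * x := by ring
    _ ≤ (if aa ≤ x then (1:ℝ) else 0) + 2 * ε' * x := by
        rw [haa]; linarith [hG3 hδ0 h2]
  have hQ1 : ∀ x ∈ Icc (0:ℝ) 1, x * pm.eval x ≤ (if Real.exp (-1) ≤ x then (1:ℝ) else 0) := by
    intro x hx
    have hgq := abs_lt.mp (hQ x hx)
    have h1 : Q.eval x - ε' ≤ glo δ x := by linarith [hgq.2]
    have h2 : (0:ℝ) ≤ x := hx.1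
    rw [hpmev]
    exact le_trans (mul_le_mul_of_nonneg_left h1 h2) (hH1 hδ0 h2)
  have hQ2 : ∀ x ∈ Icc (0:ℝ) 1, (if bb ≤ x then (1:ℝ) else 0) - 2 * ε' * x ≤ x * pm.eval x := by
    intro x hx
    have hgq := abs_lt.mp (hQ x hx)
    have h1 : glo δ x - 2 * ε' ≤ Q.eval x - ε' := by linarith [hgq.1]
    have h2 : (0:ℝ) ≤ x := hx.1
    rw [hpmev]
    have h3 : x * (glo δ x - 2 * ε') ≤ x * (Q.eval x - ε') := mul_le_mul_of_nonneg_left h1 h2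
    have h5 : x * (glo δ x - 2 * ε') = x * glo δ x - 2 * ε' * x := by ring
    split_ifs with h
    · have h4 : x * glo δ x = 1 := hH2 hδ0 (by rw [hbb] at h; exact h)
      linarith
    · have h4 := mul_nonneg h2 (glo_nonneg δ x)
      linarith
  have hx01 : ∀ t : ℝ, 0 < t → ∀ i, Real.exp (-t * lam i) ∈ Icc (0:ℝ) 1 :=
    fun t ht i => exp_mem_Icc ht (hnonneg i)
  have hmem : ∀ t : ℝ, 0 < t → ∀ i : ℕ,
      (lam i ≤ 1 / t ↔ Real.exp (-1) ≤ Real.exp (-t * lam i)) :=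
    fun t ht i => le_iff_exp_le ht
  have hcard : ∀ t : ℝ, 0 < t → ((Nat.card {i : ℕ | lam i ≤ 1 / t} : ℕ) : ℝ)
      = ((finite_le htop (1 / t)).toFinset.card : ℝ) := by
    intro t ht
    rw [Nat.card_coe_set_eq, Set.ncard_eq_toFinset_card _ (finite_le htop (1 / t))]
  have hub : ∀ t : ℝ, 0 < t → ((Nat.card {i : ℕ | lam i ≤ 1 / t} : ℕ) : ℝ)
      ≤ ∑' i, Real.exp (-t * lam i) * pp.eval (Real.exp (-t * lam i)) := by
    intro t ht
    rw [hcard t ht]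
    set T := (finite_le htop (1 / t)).toFinset with hT
    have hmemT : ∀ i, i ∈ T ↔ lam i ≤ 1 / t := fun i => by
      rw [hT, Set.Finite.mem_toFinset]; exact Iff.rfl
    have hterm : ∀ i ∉ T, 0 ≤ Real.exp (-t * lam i) * pp.eval (Real.exp (-t * lam i)) := by
      intro i hi
      have h := hP1 _ (hx01 t ht i)
      rwa [if_neg (fun hc => hi ((hmemT i).mpr ((hmem t ht i).mpr hc)))] at h
    calc (T.card : ℝ) = ∑ _i ∈ T, (1:ℝ) := by simp
    _ ≤ ∑ i ∈ T, Real.exp (-t * lam i) * pp.eval (Real.exp (-t * lam i)) := by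
        refine Finset.sum_le_sum fun i hi => ?_
        have h := hP1 _ (hx01 t ht i)
        rwa [if_pos ((hmem t ht i).1 ((hmemT i).1 hi))] at h
    _ ≤ ∑' i, Real.exp (-t * lam i) * pp.eval (Real.exp (-t * lam i)) :=
        Summable.sum_le_tsum T hterm (summable_poly hsumm pp ht)
  have hlbd : ∀ t : ℝ, 0 < t →
      ∑' i, Real.exp (-t * lam i) * pm.eval (Real.exp (-t * lam i))
        ≤ ((Nat.card {i : ℕ | lam i ≤ 1 / t} : ℕ) : ℝ) := by
    intro t ht
    rw [hcard t ht]
    set T := (finite_le htop (1 / t)).toFinset with hT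
    have hmemT : ∀ i, i ∈ T ↔ lam i ≤ 1 / t := fun i => by
      rw [hT, Set.Finite.mem_toFinset]; exact Iff.rfl
    have hg : ∀ i, Real.exp (-t * lam i) * pm.eval (Real.exp (-t * lam i))
        ≤ (if i ∈ T then (1:ℝ) else 0) := by
      intro i
      have h := hQ1 _ (hx01 t ht i)
      split_ifs with hi
      · rwa [if_pos ((hmem t ht i).1 ((hmemT i).1 hi))] at h
      · rwa [if_neg (fun hc => hi ((hmemT i).mpr ((hmem t ht i).2 hc)))] at h
    calc ∑' i, Real.exp (-t * lam i) * pm.eval (Real.exp (-t * lam i))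
        ≤ ∑' i, (if i ∈ T then (1:ℝ) else 0) :=
          (summable_poly hsumm pm ht).tsum_le_tsum hg
            (summable_of_ne_finset_zero (s := T) fun i hi => if_neg hi)
    _ = ∑ i ∈ T, (if i ∈ T then (1:ℝ) else 0) := tsum_eq_sum fun i hi => if_neg hi
    _ = (T.card : ℝ) := by
        rw [Finset.sum_congr rfl fun i hi => if_pos hi]; simp
  -- integrals
  have hind : ∀ cc : ℝ, IntegrableOn ((Iic cc).indicator fun x : ℝ => x ^ (r - 1)) (Ioi 0) := by
    intro cc
    rw [IntegrableOn, integrable_indicator_iff measurableSet_Iic]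
    rw [IntegrableOn, Measure.restrict_restrict measurableSet_Iic]
    have heq : Iic cc ∩ Ioi (0:ℝ) = Ioc 0 cc := by rw [Set.inter_comm, Set.Ioi_inter_Iic]
    rw [heq]
    exact (intervalIntegral.intervalIntegrable_rpow' (by linarith)).1
  have hgamint : IntegrableOn (fun x : ℝ => Real.exp (-x) * x ^ (r - 1)) (Ioi 0) :=
    Real.GammaIntegral_convergent hr
  have hindval : ∀ cc : ℝ, 0 < cc →
      ∫ x in Ioi (0:ℝ), (Iic cc).indicator (fun x : ℝ => x ^ (r - 1)) x = cc ^ r / r := by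
    intro cc hcc
    rw [setIntegral_indicator measurableSet_Iic, Set.Ioi_inter_Iic,
      ← intervalIntegral.integral_of_le hcc.le, integral_rpow (Or.inl (by linarith)),
      sub_add_cancel, Real.zero_rpow (ne_of_gt hr)]
    ring
  have hgamval : ∫ x in Ioi (0:ℝ), Real.exp (-x) * x ^ (r - 1) = Real.Gamma r :=
    (Real.Gamma_eq_integral hr).symm
  have hiffgen : ∀ (w : ℝ), 0 < w → ∀ x : ℝ, (w ≤ Real.exp (-x) ↔ x ≤ -Real.log w) := by
    intro w hw x
    constructor
    · intro h
      rw [← Real.exp_log hw] at h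
      have := Real.exp_le_exp.mp h
      linarith
    · intro h
      have h2 : Real.log w ≤ -x := by linarith
      calc w = Real.exp (Real.log w) := (Real.exp_log hw).symm
      _ ≤ Real.exp (-x) := Real.exp_le_exp.mpr h2
  have hJu : ∫ x in Ioi (0:ℝ), Real.exp (-x) * pp.eval (Real.exp (-x)) * x ^ (r - 1)
      ≤ cp ^ r / r + 2 * ε' * Real.Gamma r := by
    have hmono : ∀ x ∈ Ioi (0:ℝ),
        Real.exp (-x) * pp.eval (Real.exp (-x)) * x ^ (r - 1)
          ≤ (Iic cp).indicator (fun x : ℝ => x ^ (r - 1)) x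
            + 2 * ε' * (Real.exp (-x) * x ^ (r - 1)) := by
      intro x hx
      have hx0 : (0:ℝ) < x := hx
      have hy : Real.exp (-x) ∈ Icc (0:ℝ) 1 :=
        ⟨(Real.exp_pos _).le, Real.exp_le_one_iff.mpr (by linarith)⟩
      have h2 := hP2 _ hy
      have hxr : (0:ℝ) ≤ x ^ (r - 1) := Real.rpow_nonneg hx0.le _
      have hiff : aa ≤ Real.exp (-x) ↔ x ≤ cp := by rw [hcp]; exact hiffgen aa ha0 x
      calc Real.exp (-x) * pp.eval (Real.exp (-x)) * x ^ (r - 1)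
          = (Real.exp (-x) * pp.eval (Real.exp (-x))) * x ^ (r - 1) := by ring
      _ ≤ ((if aa ≤ Real.exp (-x) then (1:ℝ) else 0) + 2 * ε' * Real.exp (-x)) * x ^ (r - 1) :=
          mul_le_mul_of_nonneg_right h2 hxr
      _ = (if aa ≤ Real.exp (-x) then (1:ℝ) else 0) * x ^ (r - 1)
            + 2 * ε' * (Real.exp (-x) * x ^ (r - 1)) := by ring
      _ = (Iic cp).indicator (fun x : ℝ => x ^ (r - 1)) x
            + 2 * ε' * (Real.exp (-x) * x ^ (r - 1)) := by
          rw [Set.indicator_apply]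
          by_cases h : x ∈ Iic cp
          · rw [if_pos h, if_pos (hiff.mpr h), one_mul]
          · rw [if_neg h, if_neg (fun hc => h (hiff.mp hc)), zero_mul]
    have hval : (∫ x in Ioi (0:ℝ), ((Iic cp).indicator (fun x : ℝ => x ^ (r - 1)) x
          + 2 * ε' * (Real.exp (-x) * x ^ (r - 1))))
        = cp ^ r / r + 2 * ε' * Real.Gamma r := by
      rw [integral_add (hind cp) (hgamint.const_mul _), hindval cp hcp0, integral_const_mul,
        hgamval]
    calc ∫ x in Ioi (0:ℝ), Real.exp (-x) * pp.eval (Real.exp (-x)) * x ^ (r - 1)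
        ≤ ∫ x in Ioi (0:ℝ), ((Iic cp).indicator (fun x : ℝ => x ^ (r - 1)) x
            + 2 * ε' * (Real.exp (-x) * x ^ (r - 1))) :=
          setIntegral_mono_on (integrable_polyJ hr pp) ((hind cp).add (hgamint.const_mul _))
            measurableSet_Ioi hmono
    _ = _ := hval
  have hJv : cm ^ r / r - 2 * ε' * Real.Gamma r
      ≤ ∫ x in Ioi (0:ℝ), Real.exp (-x) * pm.eval (Real.exp (-x)) * x ^ (r - 1) := by
    have hmono : ∀ x ∈ Ioi (0:ℝ),
        (Iic cm).indicator (fun x : ℝ => x ^ (r - 1)) x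
            - 2 * ε' * (Real.exp (-x) * x ^ (r - 1))
          ≤ Real.exp (-x) * pm.eval (Real.exp (-x)) * x ^ (r - 1) := by
      intro x hx
      have hx0 : (0:ℝ) < x := hx
      have hy : Real.exp (-x) ∈ Icc (0:ℝ) 1 :=
        ⟨(Real.exp_pos _).le, Real.exp_le_one_iff.mpr (by linarith)⟩
      have h2 := hQ2 _ hy
      have hxr : (0:ℝ) ≤ x ^ (r - 1) := Real.rpow_nonneg hx0.le _
      have hiff : bb ≤ Real.exp (-x) ↔ x ≤ cm := by rw [hcm]; exact hiffgen bb hb0 x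
      calc (Iic cm).indicator (fun x : ℝ => x ^ (r - 1)) x
            - 2 * ε' * (Real.exp (-x) * x ^ (r - 1))
          = ((if bb ≤ Real.exp (-x) then (1:ℝ) else 0) - 2 * ε' * Real.exp (-x)) * x ^ (r - 1) := by
              rw [Set.indicator_apply]
              by_cases h : x ∈ Iic cm
              · rw [if_pos h, if_pos (hiff.mpr h)]; ring
              · rw [if_neg h, if_neg (fun hc => h (hiff.mp hc))]; ring
      _ ≤ (Real.exp (-x) * pm.eval (Real.exp (-x))) * x ^ (r - 1) :=
          mul_le_mul_of_nonneg_right h2 hxr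
      _ = Real.exp (-x) * pm.eval (Real.exp (-x)) * x ^ (r - 1) := by ring
    have hval : (∫ x in Ioi (0:ℝ), ((Iic cm).indicator (fun x : ℝ => x ^ (r - 1)) x
          - 2 * ε' * (Real.exp (-x) * x ^ (r - 1))))
        = cm ^ r / r - 2 * ε' * Real.Gamma r := by
      rw [integral_sub (hind cm) (hgamint.const_mul _), hindval cm hcm0, integral_const_mul,
        hgamval]
    calc cm ^ r / r - 2 * ε' * Real.Gamma r
        = ∫ x in Ioi (0:ℝ), ((Iic cm).indicator (fun x : ℝ => x ^ (r - 1)) x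
            - 2 * ε' * (Real.exp (-x) * x ^ (r - 1))) := hval.symm
    _ ≤ ∫ x in Ioi (0:ℝ), Real.exp (-x) * pm.eval (Real.exp (-x)) * x ^ (r - 1) :=
          setIntegral_mono_on ((hind cm).sub (hgamint.const_mul _)) (integrable_polyJ hr pm)
            measurableSet_Ioi hmono
  set u : ℝ → ℝ := fun t =>
    t ^ r * ∑' i, Real.exp (-t * lam i) * pp.eval (Real.exp (-t * lam i)) with hu
  set v : ℝ → ℝ := fun t =>
    t ^ r * ∑' i, Real.exp (-t * lam i) * pm.eval (Real.exp (-t * lam i)) with hv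
  set Lu : ℝ := A * ∑ k ∈ Finset.range (pp.natDegree + 1), pp.coeff k * ((k : ℝ) + 1) ^ (-r)
    with hLudef
  set Lv : ℝ := A * ∑ k ∈ Finset.range (pm.natDegree + 1), pm.coeff k * ((k : ℝ) + 1) ^ (-r)
    with hLvdef
  have htu : Tendsto u (𝓝[>] 0) (𝓝 Lu) := poly_limit hsumm hF pp
  have htv : Tendsto v (𝓝[>] 0) (𝓝 Lv) := poly_limit hsumm hF pm
  have hLuJ : Lu = A / Real.Gamma r
      * ∫ x in Ioi (0:ℝ), Real.exp (-x) * pp.eval (Real.exp (-x)) * x ^ (r - 1) := by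
    rw [hLudef, J_eq hr pp]
    field_simp
  have hLvJ : Lv = A / Real.Gamma r
      * ∫ x in Ioi (0:ℝ), Real.exp (-x) * pm.eval (Real.exp (-x)) * x ^ (r - 1) := by
    rw [hLvdef, J_eq hr pm]
    field_simp
  have hA2 : 2 * A * ε' = ε / 4 := by rw [hε'def]; field_simp; ring
  have hLub : Lu ≤ c + ε := by
    rw [hLuJ]
    have h1 := mul_le_mul_of_nonneg_left hJu (le_of_lt (div_pos hA hΓr))
    refine h1.trans ?_
    have key : A / Real.Gamma r * (cp ^ r / r + 2 * ε' * Real.Gamma r)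
        = c * cp ^ r + 2 * A * ε' := by
      rw [hc, hΓr1]
      field_simp
    rw [key, hA2]
    have h2 : c * cp ^ r ≤ c * (1 + ε / (4 * c)) := mul_le_mul_of_nonneg_left hφ.le hcpos.le
    have h3 : c * (1 + ε / (4 * c)) = c + ε / 4 := by field_simp
    linarith
  have hLvb : c - ε ≤ Lv := by
    rw [hLvJ]
    have h1 := mul_le_mul_of_nonneg_left hJv (le_of_lt (div_pos hA hΓr))
    refine le_trans ?_ h1
    have key : A / Real.Gamma r * (cm ^ r / r - 2 * ε' * Real.Gamma r)
        = c * cm ^ r - 2 * A * ε' := by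
      rw [hc, hΓr1]
      field_simp
    rw [key, hA2]
    have h2 : c * (1 - ε / (4 * c)) ≤ c * cm ^ r := mul_le_mul_of_nonneg_left hψ.le hcpos.le
    have h3 : c * (1 - ε / (4 * c)) = c - ε / 4 := by field_simp
    linarith
  refine ⟨u, v, Lu, Lv, ?_, htu, htv, hLub, hLvb⟩
  filter_upwards [self_mem_nhdsWithin] with t (ht : (0:ℝ) < t)
  have htr : (0:ℝ) ≤ t ^ r := Real.rpow_nonneg ht.le r
  exact ⟨mul_le_mul_of_nonneg_left (hlbd t ht) htr,
    mul_le_mul_of_nonneg_left (hub t ht) htr⟩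

end Karamata13

open Karamata13 in
/-- Karamata: If (λ_i) is nondecreasing, nonnegative, tending to
infinity, and ∑_i e^{-tλ_i} ~ V(4πt)^{-d/2} as t → 0⁺, then the counting function
N(Λ) = #{i : λ_i ≤ Λ} satisfies N(Λ) ~ V Λ^{d/2}/((4π)^{d/2} Γ(d/2+1)). -/
theorem stmt13 (lam : ℕ → ℝ) (hmono : Monotone lam) (hnonneg : ∀ i, 0 ≤ lam i)
    (htop : Tendsto lam atTop atTop) (d V : ℝ) (hd : 0 < d) (hV : 0 < V)
    (hsumm : ∀ t : ℝ, 0 < t → Summable fun i => Real.exp (-t * lam i))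
    (hheat : Tendsto
      (fun t : ℝ => (∑' i : ℕ, Real.exp (-t * lam i)) /
        (V * (4 * Real.pi * t) ^ (-(d / 2))))
      (nhdsWithin 0 (Set.Ioi 0)) (nhds 1)) :
    Tendsto
      (fun L : ℝ => ((Nat.card {i : ℕ | lam i ≤ L}) : ℝ) /
        (V * L ^ (d / 2) / ((4 * Real.pi) ^ (d / 2) * Real.Gamma (d / 2 + 1))))
      atTop (nhds 1) := by
  set r : ℝ := d / 2 with hrdef
  have hr : 0 < r := by rw [hrdef]; positivity
  have h4π : (0:ℝ) < 4 * Real.pi := by positivity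
  set A : ℝ := V * (4 * Real.pi) ^ (-r) with hAdef
  have hA : 0 < A := by rw [hAdef]; positivity
  have hΓ : (0:ℝ) < Real.Gamma (r + 1) := Real.Gamma_pos_of_pos (by linarith)
  have hF : Tendsto (fun t => t ^ r * F lam t) (𝓝[>] 0) (𝓝 A) := by
    have h := hheat.mul_const A
    rw [one_mul] at h
    refine Tendsto.congr' ?_ h
    filter_upwards [self_mem_nhdsWithin] with t (ht : (0:ℝ) < t)
    have h1 : (4 * Real.pi * t) ^ (-r) = (4 * Real.pi) ^ (-r) * t ^ (-r) :=
      Real.mul_rpow h4π.le ht.le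
    have hne1 : V ≠ 0 := ne_of_gt hV
    have hne2 : (4 * Real.pi) ^ (-r) ≠ 0 := ne_of_gt (Real.rpow_pos_of_pos h4π _)
    have hne3 : t ^ r ≠ 0 := ne_of_gt (Real.rpow_pos_of_pos ht _)
    show F lam t / (V * (4 * Real.pi * t) ^ (-r)) * A = t ^ r * F lam t
    rw [h1, Real.rpow_neg ht.le, hAdef]
    field_simp
  have hmain := karamata_main hnonneg htop hsumm hr hA hF
  have hinv : Tendsto (fun L : ℝ => 1 / L) atTop (𝓝[>] (0:ℝ)) := by
    rw [tendsto_nhdsWithin_iff]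
    constructor
    · simpa [one_div] using tendsto_inv_atTop_zero
    · filter_upwards [eventually_gt_atTop (0:ℝ)] with L hL
      exact Set.mem_Ioi.mpr (by positivity)
  have hmul := (hmain.comp hinv).mul_const ((4 * Real.pi) ^ r * Real.Gamma (r + 1) / V)
  have hlim : A / Real.Gamma (r + 1) * ((4 * Real.pi) ^ r * Real.Gamma (r + 1) / V) = 1 := by
    rw [hAdef, Real.rpow_neg h4π.le]
    have hne2 : (4 * Real.pi) ^ r ≠ 0 := ne_of_gt (Real.rpow_pos_of_pos h4π _)
    field_simp
  rw [hlim] at hmul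
  refine Tendsto.congr' ?_ hmul
  filter_upwards [eventually_gt_atTop (0:ℝ)] with L (hL : 0 < L)
  simp only [Function.comp_apply]
  rw [one_div_one_div]
  have h2 : (1 / L) ^ r = (L ^ r)⁻¹ := by rw [one_div, Real.inv_rpow hL.le]
  have hne1 : V ≠ 0 := ne_of_gt hV
  have hne2 : (4 * Real.pi) ^ r ≠ 0 := ne_of_gt (Real.rpow_pos_of_pos h4π _)
  have hne3 : L ^ r ≠ 0 := ne_of_gt (Real.rpow_pos_of_pos hL _)
  rw [h2]
  have key : ∀ (N W G X : ℝ), W ≠ 0 → G ≠ 0 → X ≠ 0 → V ≠ 0 →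
      (X⁻¹ * N) * (W * G / V) = N / (V * X / (W * G)) := by
    intros N W G X hW hG hX hV'
    field_simp
    try ring
    try tauto
  exact key _ _ _ _ hne2 (ne_of_gt hΓ) hne3 hne1
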